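/- Assume the Setup (Section 2) with conditions (sing), (main0), (main1), (xxnxxn1): sup_{n≥0} ‖X_n‖‖X_n⁻¹‖ < ∞, (qqn): sup_{n≥0} ‖Q_n‖ < ∞, and (cap): ∩_{n≥0} ⋁_{k≥n} H_k = {0}. Set H'_n = H ⊖ ⋁_{k≠n} H_k. Then the adjoint T* satisfies (main0), (main1), (xxnxxn1), (qqn) with the families {H'_n}_{n≥0} and {U_{0n}⁻¹}_{n≥0}: each H'_n is a nonzero closed T*-invariant subspace, H'_n ∩ ⋁_{k≠n}H'_k = {0} and H'_n + ⋁_{k≠n}H'_k = H for every n, there are bounded invertible X'_n : H'_n → K_{0n} with X'_n(T*|_{H'_n}) = U_{0n}⁻¹ X'_n and sup_n ‖X'_n‖‖X'_n⁻¹‖ < ∞, and the skew projections Q'_n onto H'_n along ⋁_{k≠n}H'_k satisfy sup_n ‖Q'_n‖ < ∞. Moreover the following are equivalent: (i) there exists c' > 0 such that c'² Σ_n ‖x'_n‖² ≤ ‖Σ_n x'_n‖² for every finite family {x'_n}_n with x'_n ∈ H'_n; (ii) there exists C > 0 such that ‖Σ_n x_n‖² ≤ C² Σ_n ‖x_n‖²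 for every finite family {x_n}_n with x_n ∈ H_n. -/

import Mathlib

noncomputable section
set_option linter.unusedSectionVars false
set_option maxHeartbeats 1000000
open scoped ENNReal InnerProductSpace
open ContinuousLinearMap

/-- A bounded operator `V` is an isometry. -/
def IsIsometryOp {K : Type} [NormedAddCommGroup K] [InnerProductSpace ℂ K]
    (V : K →L[ℂ] K) : Prop :=
  ∀ x, ‖V x‖ = ‖x‖

/-- A bounded operator `V` is unitary: an isometry onto. -/
def IsUnitaryOp {K : Type} [NormedAddCommGroup K] [InnerProductSpace ℂ K]
    (V : K →L[ℂ] K) : Prop :=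
  (∀ x, ‖V x‖ = ‖x‖) ∧ Function.Surjective V

/-- Proposition 2.8: the adjoint `T*` satisfies the Setup with the dual family
`H′_n = H ⊖ ⋁_{k ≠ n} H_k` and the inverses `U_{0n}⁻¹`; moreover the lower estimate for
the dual family is equivalent to the upper estimate for the original family. -/
theorem dual_setup_for_adjoint
    {H : Type} [NormedAddCommGroup H] [InnerProductSpace ℂ H] [CompleteSpace H]
    [TopologicalSpace.SeparableSpace H]
    (K0 : ℕ → Type) [∀ n, NormedAddCommGroup (K0 n)] [∀ n, InnerProductSpace ℂ (K0 n)]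
    [∀ n, CompleteSpace (K0 n)] [∀ n, TopologicalSpace.SeparableSpace (K0 n)]
    -- the unitaries `U_{0n}`, each reductive, with pairwise singular spectral measures:
    (U0 : ∀ n, K0 n →L[ℂ] K0 n)
    (hU0 : ∀ n, IsUnitaryOp (U0 n))
    (hU0red : ∀ (n) (F : Submodule ℂ (K0 n)), IsClosed (F : Set (K0 n)) →
      (∀ x ∈ F, U0 n x ∈ F) → ∀ x ∈ F, ContinuousLinearMap.adjoint (U0 n) x ∈ F)
    (hsing : ∀ n k, n ≠ k → ∀ Z : K0 n →L[ℂ] K0 k, Z.comp (U0 n) = (U0 k).comp Z → Z = 0)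
    (T : H →L[ℂ] H)
    -- the nonzero closed `T`-invariant subspaces `H_n`:
    (Hn : ℕ → Submodule ℂ H)
    (hHcl : ∀ n, IsClosed ((Hn n : Set H)))
    (hHne : ∀ n, Hn n ≠ ⊥)
    (hTH : ∀ n, ∀ x ∈ Hn n, T x ∈ Hn n)
    -- `Vn n = ⋁_{k ≠ n} H_k`:
    (Vn : ℕ → Submodule ℂ H)
    (hVn : ∀ n, Vn n = (⨆ k ∈ {k : ℕ | k ≠ n}, Hn k).topologicalClosure)
    -- (main0):
    (hmain0 : ∀ n, Hn n ⊓ Vn n = ⊥ ∧ Hn n ⊔ Vn n = ⊤)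
    -- (main1): the invertible intertwiners `X_n : H_n → K_{0n}`:
    (X0 : ∀ n, ↥(Hn n) ≃L[ℂ] K0 n)
    (hX0 : ∀ (n) (x : ↥(Hn n)), X0 n ⟨T ↑x, hTH n ↑x x.2⟩ = U0 n (X0 n x))
    -- the skew projections `Q_n` onto `H_n` along `⋁_{k ≠ n} H_k`:
    (Q : ℕ → H →L[ℂ] H)
    (hQmem : ∀ n x, Q n x ∈ Hn n)
    (hQid : ∀ n, ∀ x ∈ Hn n, Q n x = x)
    (hQker : ∀ n, ∀ x ∈ Vn n, Q n x = 0)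
    -- the inverses `U_{0n}⁻¹`:
    (U0inv : ∀ n, K0 n →L[ℂ] K0 n)
    (hU0inv : ∀ n, (U0 n).comp (U0inv n) = ContinuousLinearMap.id ℂ (K0 n) ∧
      (U0inv n).comp (U0 n) = ContinuousLinearMap.id ℂ (K0 n))
    -- (xxnxxn1):
    (hXX : ∃ C : ℝ, ∀ n,
      ‖(X0 n : ↥(Hn n) →L[ℂ] K0 n)‖ * ‖((X0 n).symm : K0 n →L[ℂ] ↥(Hn n))‖ ≤ C)
    -- (qqn):
    (hQbd : ∃ C : ℝ, ∀ n, ‖Q n‖ ≤ C)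
    -- (cap):
    (hcap : (⨅ n : ℕ, (⨆ k ∈ {k : ℕ | n ≤ k}, Hn k).topologicalClosure) = ⊥)
    -- `H′_n = H ⊖ ⋁_{k ≠ n} H_k` and `V′_n = ⋁_{k ≠ n} H′_k`:
    (Hn' : ℕ → Submodule ℂ H) (hHn' : ∀ n, Hn' n = (Vn n)ᗮ)
    (Vn' : ℕ → Submodule ℂ H)
    (hVn' : ∀ n, Vn' n = (⨆ k ∈ {k : ℕ | k ≠ n}, Hn' k).topologicalClosure) :
    -- the `H′_n` are nonzero closed `T*`-invariant subspaces:
    (∀ n, Hn' n ≠ ⊥) ∧ (∀ n, IsClosed ((Hn' n : Set H))) ∧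
    ∃ hTadj : ∀ n, ∀ x ∈ Hn' n, ContinuousLinearMap.adjoint T x ∈ Hn' n,
      -- (main0) for the dual family:
      (∀ n, Hn' n ⊓ Vn' n = ⊥ ∧ Hn' n ⊔ Vn' n = ⊤) ∧
      -- (main1) and (xxnxxn1) for the dual family, with `U_{0n}⁻¹`:
      (∃ X0' : ∀ n, ↥(Hn' n) ≃L[ℂ] K0 n,
        (∀ (n) (x : ↥(Hn' n)),
          X0' n ⟨ContinuousLinearMap.adjoint T ↑x, hTadj n ↑x x.2⟩ = U0inv n (X0' n x)) ∧
        ∃ C1 : ℝ, ∀ n,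
          ‖(X0' n : ↥(Hn' n) →L[ℂ] K0 n)‖ * ‖((X0' n).symm : K0 n →L[ℂ] ↥(Hn' n))‖ ≤ C1) ∧
      -- (qqn) for the dual family:
      (∃ Q' : ℕ → H →L[ℂ] H, (∀ n x, Q' n x ∈ Hn' n) ∧ (∀ n, ∀ x ∈ Hn' n, Q' n x = x) ∧
        (∀ n, ∀ x ∈ Vn' n, Q' n x = 0) ∧ ∃ C2 : ℝ, ∀ n, ‖Q' n‖ ≤ C2) ∧
      -- the equivalence (i) ↔ (ii):
      ((∃ c' : ℝ, 0 < c' ∧ ∀ (s : Finset ℕ) (x' : ℕ → H), (∀ n ∈ s, x' n ∈ Hn' n) →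
          c' ^ 2 * ∑ n ∈ s, ‖x' n‖ ^ 2 ≤ ‖∑ n ∈ s, x' n‖ ^ 2) ↔
        (∃ C : ℝ, 0 < C ∧ ∀ (s : Finset ℕ) (x : ℕ → H), (∀ n ∈ s, x n ∈ Hn n) →
          ‖∑ n ∈ s, x n‖ ^ 2 ≤ C ^ 2 * ∑ n ∈ s, ‖x n‖ ^ 2)) := by

  classical
  -- closedness facts and complete-space instances
  have hVcl : ∀ n, IsClosed ((Vn n : Set H)) := fun n => by
    rw [hVn]; exact Submodule.isClosed_topologicalClosure _
  have hH'cl : ∀ n, IsClosed ((Hn' n : Set H)) := fun n => by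
    rw [hHn']; exact Submodule.isClosed_orthogonal _
  have hV'cl : ∀ n, IsClosed ((Vn' n : Set H)) := fun n => by
    rw [hVn']; exact Submodule.isClosed_topologicalClosure _
  -- the adjoint projections
  set Qa : ℕ → H →L[ℂ] H := fun n => ContinuousLinearMap.adjoint (Q n) with hQadef
  -- basic toolbox
  have hQQ : ∀ n x, Q n (Q n x) = Q n x := fun n x => hQid n _ (hQmem n x)
  have hHV : ∀ n k, n ≠ k → Hn n ≤ Vn k := by
    intro n k h
    rw [hVn]
    exact le_trans (le_iSup₂ (f := fun j (_ : j ∈ {j : ℕ | j ≠ k}) => Hn j) n h)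
      (Submodule.le_topologicalClosure _)
  have hkerQ : ∀ n x, Q n x = 0 ↔ x ∈ Vn n := by
    intro n x
    constructor
    · intro h0
      have hx : x ∈ Hn n ⊔ Vn n := by rw [(hmain0 n).2]; trivial
      obtain ⟨a, ha, b, hb, hab⟩ := Submodule.mem_sup.mp hx
      have hQx : Q n x = a := by
        rw [← hab, map_add, hQid n a ha, hQker n b hb, add_zero]
      rw [h0] at hQx
      rw [← hab, ← hQx, zero_add]
      exact hb
    · exact hQker n x
  have hmemH' : ∀ n x, x ∈ Hn' n ↔ Qa n x = x := by
    intro n x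
    rw [hHn', Submodule.mem_orthogonal]
    constructor
    · intro h
      refine ext_inner_left ℂ fun y => ?_
      rw [hQadef]
      rw [ContinuousLinearMap.adjoint_inner_right]
      have hy : Q n y - y ∈ Vn n := by
        rw [← hkerQ, map_sub, hQQ, sub_self]
      have h2 := h _ hy
      rw [inner_sub_left, sub_eq_zero] at h2
      exact h2
    · intro h v hv
      rw [← h, hQadef, ContinuousLinearMap.adjoint_inner_right, hQker n v hv,
        inner_zero_left]
  have hkerQa : ∀ n x, Qa n x = 0 ↔ x ∈ (Hn n)ᗮ := by
    intro n x
    rw [Submodule.mem_orthogonal]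
    constructor
    · intro h u hu
      calc (inner ℂ u x : ℂ) = inner ℂ (Q n u) x := by rw [hQid n u hu]
        _ = inner ℂ u (Qa n x) := by
            rw [hQadef, ContinuousLinearMap.adjoint_inner_right]
        _ = 0 := by rw [h, inner_zero_right]
    · intro h
      refine ext_inner_left ℂ fun y => ?_
      rw [hQadef, ContinuousLinearMap.adjoint_inner_right, inner_zero_right]
      exact h _ (hQmem n y)
  have hQaQa : ∀ n x, Qa n (Qa n x) = Qa n x := by
    intro n x
    refine ext_inner_left ℂ fun y => ?_
    rw [hQadef, ContinuousLinearMap.adjoint_inner_right,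
      ContinuousLinearMap.adjoint_inner_right, ContinuousLinearMap.adjoint_inner_right, hQQ]
  have hH'perp : ∀ n k, n ≠ k → Hn' k ≤ (Hn n)ᗮ := by
    intro n k hnk
    rw [hHn']
    exact Submodule.orthogonal_le (hHV n k hnk)
  -- the (cap) lemma : common kernel of the Q n is trivial
  have hQzero : ∀ z : H, (∀ n, Q n z = 0) → z = 0 := by
    intro z hz
    have hmem : ∀ n, z ∈ (⨆ k ∈ {k : ℕ | n ≤ k}, Hn k).topologicalClosure := by
      intro n
      induction n with
      | zero =>
        have htop : (⊤ : Submodule ℂ H) ≤ (⨆ k ∈ {k : ℕ | 0 ≤ k}, Hn k).topologicalClosure := by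
          rw [← (hmain0 0).2]
          apply sup_le
          · exact le_trans (le_iSup₂ (f := fun j (_ : j ∈ {j : ℕ | 0 ≤ j}) => Hn j) 0 (Nat.zero_le 0))
              (Submodule.le_topologicalClosure _)
          · rw [hVn]
            apply Submodule.topologicalClosure_mono
            exact iSup₂_le fun k hk =>
              le_iSup₂ (f := fun j (_ : j ∈ {j : ℕ | 0 ≤ j}) => Hn j) k (Nat.zero_le k)
        exact htop trivial
      | succ n ih =>
        set P : H →L[ℂ] H := ContinuousLinearMap.id ℂ H - Q n with hP
        have hPz : P z = z := by
          simp [hP, hz n]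
        have h1 : z ∈ closure (((⨆ k ∈ {k : ℕ | n ≤ k}, Hn k) : Submodule ℂ H) : Set H) := by
          rw [← Submodule.topologicalClosure_coe]
          exact ih
        have h2 : P z ∈ closure (P '' (((⨆ k ∈ {k : ℕ | n ≤ k}, Hn k) : Submodule ℂ H) : Set H)) :=
          image_closure_subset_closure_image P.continuous (Set.mem_image_of_mem _ h1)
        have hmap : Submodule.map (P : H →ₗ[ℂ] H) (⨆ k ∈ {k : ℕ | n ≤ k}, Hn k)
            ≤ (⨆ k ∈ {k : ℕ | n + 1 ≤ k}, Hn k) := by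
          rw [Submodule.map_le_iff_le_comap]
          refine iSup₂_le fun k hk => fun x hx => ?_
          rcases eq_or_lt_of_le (show n ≤ k from hk) with h | h
          · have hPx : P x = 0 := by
              have : Q n x = x := hQid n x (by rw [h]; exact hx)
              simp [hP, this]
            simp [Submodule.mem_comap, hPx]
          · have hQx : Q n x = 0 := hQker n x (hHV k n (Nat.ne_of_gt h) hx)
            have hPx : P x = x := by simp [hP, hQx]
            rw [Submodule.mem_comap, ContinuousLinearMap.coe_coe, hPx]
            exact le_iSup₂ (f := fun j (_ : j ∈ {j : ℕ | n + 1 ≤ j}) => Hn j) k h hx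
        have h3 : P '' (((⨆ k ∈ {k : ℕ | n ≤ k}, Hn k) : Submodule ℂ H) : Set H)
            ⊆ (((⨆ k ∈ {k : ℕ | n + 1 ≤ k}, Hn k) : Submodule ℂ H) : Set H) := by
          rintro _ ⟨y, hy, rfl⟩
          exact hmap (Submodule.mem_map_of_mem hy)
        rw [hPz] at h2
        have h4 : z ∈ closure (((⨆ k ∈ {k : ℕ | n + 1 ≤ k}, Hn k) : Submodule ℂ H) : Set H) :=
          closure_mono h3 h2
        rw [← Submodule.topologicalClosure_coe] at h4
        exact h4
    have : z ∈ (⨅ n : ℕ, (⨆ k ∈ {k : ℕ | n ≤ k}, Hn k).topologicalClosure) :=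
      (Submodule.mem_iInf _).mpr hmem
    rw [hcap] at this
    simpa using this
  -- Vn' n = (Hn n)ᗮ
  have hV'le : ∀ n, Vn' n ≤ (Hn n)ᗮ := by
    intro n
    rw [hVn' n]
    exact Submodule.topologicalClosure_minimal _
      (iSup₂_le fun k hk => hH'perp n k (Ne.symm hk)) (Submodule.isClosed_orthogonal _)
  have hVn'eq : ∀ n, Vn' n = (Hn n)ᗮ := by
    intro n
    refine le_antisymm (hV'le n) ?_
    intro z hz
    haveI := (hV'cl n).completeSpace_coe
    set w : H := ((Submodule.orthogonalProjection (Vn' n)) z : H) with hwdef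
    have hw : w ∈ Vn' n := SetLike.coe_mem _
    set r : H := z - w with hrdef
    have hr : r ∈ (Vn' n)ᗮ := Submodule.sub_starProjection_mem_orthogonal (K := Vn' n) z
    have hrV : ∀ k, k ≠ n → r ∈ Vn k := by
      intro k hkn
      have h1 : r ∈ (Hn' k)ᗮ := by
        refine Submodule.orthogonal_le ?_ hr
        rw [hVn' n]
        exact le_trans (le_iSup₂ (f := fun j (_ : j ∈ {j : ℕ | j ≠ n}) => Hn' j) k hkn)
          (Submodule.le_topologicalClosure _)
      rw [hHn' k] at h1
      haveI := (hVcl k).completeSpace_coe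
      rwa [Submodule.orthogonal_orthogonal] at h1
    have hrz : r - Q n r = 0 := by
      apply hQzero
      intro m
      by_cases hm : m = n
      · subst hm; rw [map_sub, hQQ, sub_self]
      · have hQr : Q m r = 0 := hQker m r (hrV m hm)
        have hQ2 : Q m (Q n r) = 0 := hQker m _ (hHV n m (Ne.symm hm) (hQmem n r))
        rw [map_sub, hQr, hQ2, sub_zero]
    have hrHn : r ∈ Hn n := by
      rw [sub_eq_zero] at hrz
      rw [hrz]
      exact hQmem n r
    have hwperp : w ∈ (Hn n)ᗮ := hV'le n hw
    have hrperp : r ∈ (Hn n)ᗮ := Submodule.sub_mem _ hz hwperp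
    have hr0 : r = 0 := by
      have h0 : (inner ℂ r r : ℂ) = 0 :=
        (Submodule.mem_orthogonal _ _).mp hrperp r hrHn
      exact inner_self_eq_zero.mp h0
    have : z = w := by rw [← sub_eq_zero]; exact hr0
    rw [this]
    exact hw
  -- density of the span of the Hn'
  have hdense : (⨆ n, Hn' n).topologicalClosure = ⊤ := by
    rw [Submodule.topologicalClosure_eq_top_iff, Submodule.eq_bot_iff]
    intro z hz
    apply hQzero
    intro n
    have h1 : z ∈ (Hn' n)ᗮ := Submodule.orthogonal_le (le_iSup _ n) hz
    rw [hHn' n] at h1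
    haveI := (hVcl n).completeSpace_coe
    rw [Submodule.orthogonal_orthogonal] at h1
    exact hQker n z h1
  -- Hn' nonzero
  have hH'ne : ∀ n, Hn' n ≠ ⊥ := by
    intro n hbot
    apply hHne n
    haveI := (hVcl n).completeSpace_coe
    rw [hHn' n] at hbot
    have hVtop : Vn n = ⊤ := Submodule.orthogonal_eq_bot_iff.mp hbot
    have := (hmain0 n).1
    rw [hVtop, inf_top_eq] at this
    exact this
  -- T-invariance of Vn, T*-invariance of Hn'
  have hVnT : ∀ n, ∀ v ∈ Vn n, T v ∈ Vn n := by
    intro n v hv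
    have hmap : Submodule.map (T : H →ₗ[ℂ] H) (⨆ k ∈ {k : ℕ | k ≠ n}, Hn k)
        ≤ (⨆ k ∈ {k : ℕ | k ≠ n}, Hn k) := by
      rw [Submodule.map_le_iff_le_comap]
      refine iSup₂_le fun k hk => fun x hx => ?_
      rw [Submodule.mem_comap]
      exact le_iSup₂ (f := fun j (_ : j ∈ {j : ℕ | j ≠ n}) => Hn j) k hk (hTH k x hx)
    have h1 : v ∈ closure (((⨆ k ∈ {k : ℕ | k ≠ n}, Hn k) : Submodule ℂ H) : Set H) := by
      rw [← Submodule.topologicalClosure_coe, ← hVn]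
      exact hv
    have h2 : T v ∈ closure (T '' (((⨆ k ∈ {k : ℕ | k ≠ n}, Hn k) : Submodule ℂ H) : Set H)) :=
      image_closure_subset_closure_image T.continuous (Set.mem_image_of_mem _ h1)
    have h3 : T '' (((⨆ k ∈ {k : ℕ | k ≠ n}, Hn k) : Submodule ℂ H) : Set H)
        ⊆ (((⨆ k ∈ {k : ℕ | k ≠ n}, Hn k) : Submodule ℂ H) : Set H) := by
      rintro _ ⟨y, hy, rfl⟩
      exact hmap (Submodule.mem_map_of_mem hy)
    have h4 := closure_mono h3 h2
    rw [← Submodule.topologicalClosure_coe, ← hVn] at h4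
    exact h4
  have hTadj : ∀ n, ∀ x ∈ Hn' n, ContinuousLinearMap.adjoint T x ∈ Hn' n := by
    intro n x hx
    rw [hHn'] at hx ⊢
    rw [Submodule.mem_orthogonal] at hx ⊢
    intro v hv
    rw [ContinuousLinearMap.adjoint_inner_right]
    exact hx _ (hVnT n v hv)
  -- (main0) for the dual family
  have hmain0' : ∀ n, Hn' n ⊓ Vn' n = ⊥ ∧ Hn' n ⊔ Vn' n = ⊤ := by
    intro n
    constructor
    · rw [Submodule.eq_bot_iff]
      intro x hx
      rw [Submodule.mem_inf] at hx
      have h1 := (hmemH' n x).mp hx.1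
      have h2 : Qa n x = 0 := by
        rw [hkerQa]
        rw [← hVn'eq]
        exact hx.2
      rw [← h1, h2]
    · rw [eq_top_iff]
      intro x _
      rw [Submodule.mem_sup]
      refine ⟨Qa n x, (hmemH' n _).mpr (hQaQa n x), x - Qa n x, ?_, by abel⟩
      rw [hVn'eq]
      rw [← hkerQa, map_sub, hQaQa, sub_self]
  haveI : ∀ n, CompleteSpace (Hn n) := fun n => (hHcl n).completeSpace_coe
  haveI : ∀ n, CompleteSpace (Hn' n) := fun n => (hH'cl n).completeSpace_coe
  have hQa_eq : ∀ n, Qa n = ContinuousLinearMap.adjoint (Q n) := fun n => rfl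
  -- the operators
  let Tn : ∀ n, ↥(Hn n) →L[ℂ] ↥(Hn n) := fun n =>
    ((T.comp (Hn n).subtypeL).codRestrict (Hn n) (fun x => hTH n ↑x x.2))
  let An : ∀ n, ↥(Hn' n) →L[ℂ] ↥(Hn n) := fun n =>
    (((Q n).comp (Hn' n).subtypeL).codRestrict (Hn n) (fun x => hQmem n ↑x))
  let Cn : ∀ n, ↥(Hn' n) →L[ℂ] ↥(Hn n) := fun n =>
    (Submodule.orthogonalProjection (Hn n)).comp (Hn' n).subtypeL
  let Dn : ∀ n, ↥(Hn n) →L[ℂ] ↥(Hn' n) := fun n =>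
    ContinuousLinearMap.adjoint (An n)
  have hAn_apply : ∀ n (x : ↥(Hn' n)), (An n x : H) = Q n (x : H) := fun n x => rfl
  have hTn_apply : ∀ n (x : ↥(Hn n)), (Tn n x : H) = T (x : H) := fun n x => rfl
  have hCinner : ∀ n (g : ↥(Hn n)) (y : ↥(Hn' n)),
      (inner ℂ g (Cn n y) : ℂ) = inner ℂ (g : H) (y : H) := by
    intro n g y
    show (inner ℂ g ((Submodule.orthogonalProjection (Hn n)) (y : H)) : ℂ) = _
    rw [Submodule.coe_inner]
    have h := (Submodule.mem_orthogonal (Hn n) _).mp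
      (show (y : H) - ((Submodule.orthogonalProjection (Hn n)) (y : H) : H) ∈ (Hn n)ᗮ from
        Submodule.sub_starProjection_mem_orthogonal (K := Hn n) (y : H)) (g : H) g.2
    rw [inner_sub_right, sub_eq_zero] at h
    rw [← h]
  have hDC : ∀ n (x : ↥(Hn' n)), Dn n (Cn n x) = x := by
    intro n x
    refine ext_inner_left ℂ fun y => ?_
    show (inner ℂ y (ContinuousLinearMap.adjoint (An n) (Cn n x)) : ℂ) = inner ℂ y x
    rw [ContinuousLinearMap.adjoint_inner_right, hCinner n (An n y) x,
      Submodule.coe_inner, hAn_apply, ← ContinuousLinearMap.adjoint_inner_right (Q n)]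
    have hx : ContinuousLinearMap.adjoint (Q n) (x : H) = (x : H) := by
      rw [← hQa_eq]; exact (hmemH' n (x : H)).mp x.2
    rw [hx]
  have hAsurj : ∀ n (c : ↥(Hn n)), ∃ y : ↥(Hn' n), An n y = c := by
    intro n c
    haveI := (hVcl n).completeSpace_coe
    refine ⟨⟨(c : H) - ((Submodule.orthogonalProjection (Vn n)) (c : H) : H), ?_⟩, ?_⟩
    · rw [hHn' n]
      exact Submodule.sub_starProjection_mem_orthogonal (K := Vn n) _
    · apply Subtype.ext
      show Q n ((c : H) - _) = (c : H)
      rw [map_sub, hQid n _ c.2, hQker n _ (SetLike.coe_mem _), sub_zero]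
  have hDinj : ∀ n (c : ↥(Hn n)), Dn n c = 0 → c = 0 := by
    intro n c hc
    obtain ⟨y, hy⟩ := hAsurj n c
    have h1 : (inner ℂ y (Dn n c) : ℂ) = 0 := by rw [hc, inner_zero_right]
    rw [show Dn n c = ContinuousLinearMap.adjoint (An n) c from rfl,
      ContinuousLinearMap.adjoint_inner_right, hy] at h1
    exact inner_self_eq_zero.mp h1
  have hCD : ∀ n (h : ↥(Hn n)), Cn n (Dn n h) = h := by
    intro n h
    have h1 : Dn n (Cn n (Dn n h) - h) = 0 := by
      rw [map_sub, hDC n (Dn n h), sub_self]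
    have h2 := hDinj n _ h1
    rwa [sub_eq_zero] at h2
  let En : ∀ n, ↥(Hn' n) ≃L[ℂ] ↥(Hn n) := fun n =>
    ContinuousLinearEquiv.equivOfInverse (Cn n) (Dn n) (hDC n) (hCD n)
  have hXcomp : ∀ n, (((X0 n).symm : K0 n →L[ℂ] ↥(Hn n))).comp
      ((X0 n : ↥(Hn n) →L[ℂ] K0 n)) = ContinuousLinearMap.id ℂ ↥(Hn n) := by
    intro n; ext x; simp
  have hXcomp2 : ∀ n, ((X0 n : ↥(Hn n) →L[ℂ] K0 n)).comp
      (((X0 n).symm : K0 n →L[ℂ] ↥(Hn n))) = ContinuousLinearMap.id ℂ (K0 n) := by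
    intro n; ext x; simp
  have hGleft : ∀ n, Function.LeftInverse
      (ContinuousLinearMap.adjoint ((X0 n : ↥(Hn n) →L[ℂ] K0 n)))
      (ContinuousLinearMap.adjoint (((X0 n).symm : K0 n →L[ℂ] ↥(Hn n)))) := by
    intro n x
    have h : (ContinuousLinearMap.adjoint ((X0 n : ↥(Hn n) →L[ℂ] K0 n))).comp
        (ContinuousLinearMap.adjoint (((X0 n).symm : K0 n →L[ℂ] ↥(Hn n)))) =
        ContinuousLinearMap.id ℂ ↥(Hn n) := by
      rw [← ContinuousLinearMap.adjoint_comp, hXcomp n, ContinuousLinearMap.adjoint_id]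
    have h2 := ContinuousLinearMap.ext_iff.mp h x
    rw [ContinuousLinearMap.comp_apply, ContinuousLinearMap.id_apply] at h2
    exact h2
  have hGright : ∀ n, Function.RightInverse
      (ContinuousLinearMap.adjoint ((X0 n : ↥(Hn n) →L[ℂ] K0 n)))
      (ContinuousLinearMap.adjoint (((X0 n).symm : K0 n →L[ℂ] ↥(Hn n)))) := by
    intro n x
    have h : (ContinuousLinearMap.adjoint (((X0 n).symm : K0 n →L[ℂ] ↥(Hn n)))).comp
        (ContinuousLinearMap.adjoint ((X0 n : ↥(Hn n) →L[ℂ] K0 n))) =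
        ContinuousLinearMap.id ℂ (K0 n) := by
      rw [← ContinuousLinearMap.adjoint_comp, hXcomp2 n, ContinuousLinearMap.adjoint_id]
    have h2 := ContinuousLinearMap.ext_iff.mp h x
    rw [ContinuousLinearMap.comp_apply, ContinuousLinearMap.id_apply] at h2
    exact h2
  let Gn : ∀ n, ↥(Hn n) ≃L[ℂ] K0 n := fun n =>
    ContinuousLinearEquiv.equivOfInverse
      (ContinuousLinearMap.adjoint (((X0 n).symm : K0 n →L[ℂ] ↥(Hn n))))
      (ContinuousLinearMap.adjoint ((X0 n : ↥(Hn n) →L[ℂ] K0 n)))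
      (hGleft n) (hGright n)
  let X0' : ∀ n, ↥(Hn' n) ≃L[ℂ] K0 n := fun n => (En n).trans (Gn n)
  -- adjoint of U0 is U0inv
  have hU0adj : ∀ n, ContinuousLinearMap.adjoint (U0 n) = U0inv n := by
    intro n
    have hiso : ∀ x y : K0 n, (inner ℂ (U0 n x) (U0 n y) : ℂ) = inner ℂ x y := by
      intro x y
      exact LinearIsometry.inner_map_map ⟨(U0 n).toLinearMap, (hU0 n).1⟩ x y
    ext x
    refine ext_inner_left ℂ fun y => ?_
    rw [ContinuousLinearMap.adjoint_inner_right]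
    have hx : U0 n (U0inv n x) = x := by
      have h := ContinuousLinearMap.ext_iff.mp (hU0inv n).1 x
      rwa [ContinuousLinearMap.comp_apply, ContinuousLinearMap.id_apply] at h
    calc (inner ℂ (U0 n y) x : ℂ) = inner ℂ (U0 n y) (U0 n (U0inv n x)) := by rw [hx]
      _ = inner ℂ y (U0inv n x) := hiso _ _
  -- intertwining of Tn with U0 via X0
  have hTnX : ∀ n, (Tn n).comp (((X0 n).symm : K0 n →L[ℂ] ↥(Hn n)))
      = (((X0 n).symm : K0 n →L[ℂ] ↥(Hn n))).comp (U0 n) := by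
    intro n
    ext y
    have key : Tn n ((X0 n).symm y) = (X0 n).symm (U0 n y) := by
      apply (X0 n).injective
      have h1 := hX0 n ((X0 n).symm y)
      have h2 : Tn n ((X0 n).symm y) = ⟨T ↑((X0 n).symm y), hTH n _ ((X0 n).symm y).2⟩ := rfl
      rw [h2, h1]
      simp
    exact congrArg Subtype.val key
  have hTnadj : ∀ n (h : ↥(Hn n)),
      ContinuousLinearMap.adjoint (((X0 n).symm : K0 n →L[ℂ] ↥(Hn n)))
        (ContinuousLinearMap.adjoint (Tn n) h)
      = ContinuousLinearMap.adjoint (U0 n)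
        (ContinuousLinearMap.adjoint (((X0 n).symm : K0 n →L[ℂ] ↥(Hn n))) h) := by
    intro n h
    have h1 := congrArg (fun f => ContinuousLinearMap.adjoint f) (hTnX n)
    simp only [ContinuousLinearMap.adjoint_comp] at h1
    have h2 := ContinuousLinearMap.ext_iff.mp h1 h
    rw [ContinuousLinearMap.comp_apply, ContinuousLinearMap.comp_apply] at h2
    exact h2
  have hCT : ∀ n (x : ↥(Hn' n)),
      Cn n ⟨ContinuousLinearMap.adjoint T ↑x, hTadj n ↑x x.2⟩
        = ContinuousLinearMap.adjoint (Tn n) (Cn n x) := by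
    intro n x
    refine ext_inner_left ℂ fun g => ?_
    rw [hCinner n g ⟨ContinuousLinearMap.adjoint T ↑x, hTadj n ↑x x.2⟩]
    rw [ContinuousLinearMap.adjoint_inner_right (Tn n) g (Cn n x)]
    rw [hCinner n (Tn n g) x]
    rw [hTn_apply]
    exact ContinuousLinearMap.adjoint_inner_right T (g : H) (x : H)
  have hX0'int : ∀ n (x : ↥(Hn' n)),
      X0' n ⟨ContinuousLinearMap.adjoint T ↑x, hTadj n ↑x x.2⟩ = U0inv n (X0' n x) := by
    intro n x
    have hXapp : ∀ z : ↥(Hn' n), X0' n z =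
        ContinuousLinearMap.adjoint (((X0 n).symm : K0 n →L[ℂ] ↥(Hn n))) (Cn n z) :=
      fun z => rfl
    rw [hXapp, hXapp, hCT n x, hTnadj n (Cn n x), hU0adj n]
  -- norm estimates
  obtain ⟨C0, hC0⟩ := hXX
  obtain ⟨CQ, hCQ⟩ := hQbd
  have hAnorm : ∀ n, ‖An n‖ ≤ ‖Q n‖ := by
    intro n
    refine ContinuousLinearMap.opNorm_le_bound _ (norm_nonneg _) fun y => ?_
    calc ‖An n y‖ = ‖Q n (y : H)‖ := by rw [← hAn_apply n y]; rfl
      _ ≤ ‖Q n‖ * ‖(y : H)‖ := (Q n).le_opNorm _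
      _ = ‖Q n‖ * ‖y‖ := rfl
  have hCnnorm : ∀ n (y : ↥(Hn' n)), ‖Cn n y‖ ≤ ‖y‖ := by
    intro n y
    calc ‖Cn n y‖ = ‖(Submodule.orthogonalProjection (Hn n)) (y : H)‖ := rfl
      _ ≤ ‖Submodule.orthogonalProjection (Hn n)‖ * ‖(y : H)‖ := (Submodule.orthogonalProjection (Hn n)).le_opNorm _
      _ ≤ 1 * ‖(y : H)‖ :=
          mul_le_mul_of_nonneg_right (Submodule.orthogonalProjectionOnto_norm_le _) (norm_nonneg _)
      _ = ‖y‖ := by rw [one_mul]; rfl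
  have hX0'norm : ∀ n, ‖(X0' n : ↥(Hn' n) →L[ℂ] K0 n)‖
      ≤ ‖((X0 n).symm : K0 n →L[ℂ] ↥(Hn n))‖ := by
    intro n
    refine ContinuousLinearMap.opNorm_le_bound _ (ContinuousLinearMap.opNorm_nonneg _) fun y => ?_
    have h1 : (X0' n : ↥(Hn' n) →L[ℂ] K0 n) y
        = ContinuousLinearMap.adjoint (((X0 n).symm : K0 n →L[ℂ] ↥(Hn n))) (Cn n y) := rfl
    have hadj : ‖ContinuousLinearMap.adjoint (((X0 n).symm : K0 n →L[ℂ] ↥(Hn n)))‖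
        = ‖((X0 n).symm : K0 n →L[ℂ] ↥(Hn n))‖ :=
      LinearIsometryEquiv.norm_map ContinuousLinearMap.adjoint _
    rw [h1]
    calc ‖ContinuousLinearMap.adjoint (((X0 n).symm : K0 n →L[ℂ] ↥(Hn n))) (Cn n y)‖
        ≤ ‖ContinuousLinearMap.adjoint (((X0 n).symm : K0 n →L[ℂ] ↥(Hn n)))‖ * ‖Cn n y‖ :=
          ContinuousLinearMap.le_opNorm _ _
      _ ≤ ‖ContinuousLinearMap.adjoint (((X0 n).symm : K0 n →L[ℂ] ↥(Hn n)))‖ * ‖y‖ :=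
          mul_le_mul_of_nonneg_left (hCnnorm n y) (ContinuousLinearMap.opNorm_nonneg _)
      _ = ‖((X0 n).symm : K0 n →L[ℂ] ↥(Hn n))‖ * ‖y‖ := by rw [hadj]
  have hX0'symmnorm : ∀ n, ‖((X0' n).symm : K0 n →L[ℂ] ↥(Hn' n))‖
      ≤ ‖Q n‖ * ‖(X0 n : ↥(Hn n) →L[ℂ] K0 n)‖ := by
    intro n
    refine ContinuousLinearMap.opNorm_le_bound _
      (mul_nonneg (ContinuousLinearMap.opNorm_nonneg _) (ContinuousLinearMap.opNorm_nonneg _)) fun y => ?_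
    have h1 : ((X0' n).symm : K0 n →L[ℂ] ↥(Hn' n)) y
        = Dn n (ContinuousLinearMap.adjoint ((X0 n : ↥(Hn n) →L[ℂ] K0 n)) y) := rfl
    have hadj : ‖ContinuousLinearMap.adjoint ((X0 n : ↥(Hn n) →L[ℂ] K0 n))‖
        = ‖(X0 n : ↥(Hn n) →L[ℂ] K0 n)‖ :=
      LinearIsometryEquiv.norm_map ContinuousLinearMap.adjoint _
    have hDnorm : ‖Dn n‖ ≤ ‖Q n‖ := by
      have h2 : ‖Dn n‖ = ‖An n‖ := LinearIsometryEquiv.norm_map ContinuousLinearMap.adjoint _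
      rw [h2]; exact hAnorm n
    rw [h1]
    calc ‖Dn n (ContinuousLinearMap.adjoint ((X0 n : ↥(Hn n) →L[ℂ] K0 n)) y)‖
        ≤ ‖Dn n‖ * ‖ContinuousLinearMap.adjoint ((X0 n : ↥(Hn n) →L[ℂ] K0 n)) y‖ :=
          ContinuousLinearMap.le_opNorm _ _
      _ ≤ ‖Dn n‖ * (‖ContinuousLinearMap.adjoint ((X0 n : ↥(Hn n) →L[ℂ] K0 n))‖ * ‖y‖) :=
          mul_le_mul_of_nonneg_left (ContinuousLinearMap.le_opNorm _ _) (ContinuousLinearMap.opNorm_nonneg _)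
      _ ≤ ‖Q n‖ * (‖ContinuousLinearMap.adjoint ((X0 n : ↥(Hn n) →L[ℂ] K0 n))‖ * ‖y‖) :=
          mul_le_mul_of_nonneg_right hDnorm
            (mul_nonneg (ContinuousLinearMap.opNorm_nonneg _) (norm_nonneg _))
      _ = ‖Q n‖ * ‖(X0 n : ↥(Hn n) →L[ℂ] K0 n)‖ * ‖y‖ := by rw [hadj]; ring
  have hC1 : ∀ n, ‖(X0' n : ↥(Hn' n) →L[ℂ] K0 n)‖ * ‖((X0' n).symm : K0 n →L[ℂ] ↥(Hn' n))‖
      ≤ (max CQ 0) * (max C0 0) := by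
    intro n
    have h1 := hX0'norm n
    have h2 := hX0'symmnorm n
    have h3 : ‖(X0 n : ↥(Hn n) →L[ℂ] K0 n)‖ * ‖((X0 n).symm : K0 n →L[ℂ] ↥(Hn n))‖
        ≤ max C0 0 := le_trans (hC0 n) (le_max_left _ _)
    have h4 : ‖Q n‖ ≤ max CQ 0 := le_trans (hCQ n) (le_max_left _ _)
    have h5 : ‖((X0' n).symm : K0 n →L[ℂ] ↥(Hn' n))‖
        ≤ (max CQ 0) * ‖(X0 n : ↥(Hn n) →L[ℂ] K0 n)‖ :=
      le_trans h2 (mul_le_mul_of_nonneg_right h4 (ContinuousLinearMap.opNorm_nonneg _))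
    have h6 : ‖(X0' n : ↥(Hn' n) →L[ℂ] K0 n)‖ * ‖((X0' n).symm : K0 n →L[ℂ] ↥(Hn' n))‖
        ≤ ‖((X0 n).symm : K0 n →L[ℂ] ↥(Hn n))‖
          * ((max CQ 0) * ‖(X0 n : ↥(Hn n) →L[ℂ] K0 n)‖) :=
      mul_le_mul h1 h5 (ContinuousLinearMap.opNorm_nonneg _) (ContinuousLinearMap.opNorm_nonneg _)
    have h7 : ‖((X0 n).symm : K0 n →L[ℂ] ↥(Hn n))‖
          * ((max CQ 0) * ‖(X0 n : ↥(Hn n) →L[ℂ] K0 n)‖)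
        = (max CQ 0) * (‖(X0 n : ↥(Hn n) →L[ℂ] K0 n)‖
          * ‖((X0 n).symm : K0 n →L[ℂ] ↥(Hn n))‖) := by ring
    have h8 : (max CQ 0) * (‖(X0 n : ↥(Hn n) →L[ℂ] K0 n)‖
          * ‖((X0 n).symm : K0 n →L[ℂ] ↥(Hn n))‖)
        ≤ (max CQ 0) * (max C0 0) := mul_le_mul_of_nonneg_left h3 (le_max_right CQ 0)
    linarith
  -- assemble everything
  refine ⟨hH'ne, hH'cl, hTadj, hmain0',
    ⟨X0', hX0'int, (max CQ 0) * (max C0 0), hC1⟩,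
    ⟨Qa, fun n x => (hmemH' n _).mpr (hQaQa n x), fun n x hx => (hmemH' n x).mp hx,
      fun n x hx => (hkerQa n x).mpr (by rw [← hVn'eq]; exact hx),
      CQ, fun n => ?_⟩, ?_⟩
  · have h : ‖Qa n‖ = ‖Q n‖ :=
      LinearIsometryEquiv.norm_map ContinuousLinearMap.adjoint (Q n)
    rw [h]; exact hCQ n
  constructor
  · -- (i) → (ii)
    rintro ⟨c', hc', hlow⟩
    refine ⟨1 / c', by positivity, ?_⟩
    intro s x hx
    set S2 := ∑ n ∈ s, ‖x n‖ ^ 2 with hS2def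
    have hS2nn : 0 ≤ S2 := Finset.sum_nonneg fun i _ => sq_nonneg _
    have key : ∀ u : H, ‖(inner ℂ (∑ n ∈ s, x n) u : ℂ)‖ ^ 2 ≤ (1 / c') ^ 2 * S2 * ‖u‖ ^ 2 := by
      intro u
      have hsub : (((⨆ n, Hn' n) : Submodule ℂ H) : Set H)
          ⊆ {w : H | ‖(inner ℂ (∑ n ∈ s, x n) w : ℂ)‖ ^ 2 ≤ (1 / c') ^ 2 * S2 * ‖w‖ ^ 2} := by
        intro w hw
        obtain ⟨f, hf⟩ := (Submodule.mem_iSup_iff_exists_dfinsupp' Hn' w).mp hw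
        set t := f.support with htdef
        have hrep : w = ∑ k ∈ t, ((f k : H)) := by rw [← hf]; rfl
        have hvmem : ∀ k, ((f k : H)) ∈ Hn' k := fun k => (f k).2
        have hinner : (inner ℂ (∑ n ∈ s, x n) w : ℂ)
            = ∑ n ∈ s ∩ t, inner ℂ (x n) ((f n : H)) := by
          rw [hrep, sum_inner]
          have hterm : ∀ n ∈ s, (inner ℂ (x n) (∑ k ∈ t, ((f k : H))) : ℂ)
              = if n ∈ t then inner ℂ (x n) ((f n : H)) else 0 := by
            intro n hn
            rw [inner_sum]
            by_cases hnt : n ∈ t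
            · rw [if_pos hnt]
              refine Finset.sum_eq_single_of_mem n hnt fun k hk hkn => ?_
              exact (Submodule.mem_orthogonal (Hn n) _).mp
                (hH'perp n k (Ne.symm hkn) (hvmem k)) (x n) (hx n hn)
            · rw [if_neg hnt]
              refine Finset.sum_eq_zero fun k hk => ?_
              have hkn : k ≠ n := fun h => hnt (h ▸ hk)
              exact (Submodule.mem_orthogonal (Hn n) _).mp
                (hH'perp n k (Ne.symm hkn) (hvmem k)) (x n) (hx n hn)
          rw [Finset.sum_congr rfl hterm, Finset.sum_ite_mem]
        have h1 : ‖(inner ℂ (∑ n ∈ s, x n) w : ℂ)‖ ≤ ∑ n ∈ s ∩ t, ‖x n‖ * ‖(f n : H)‖ := by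
          rw [hinner]
          refine le_trans (norm_sum_le _ _) (Finset.sum_le_sum fun i _ => ?_)
          exact norm_inner_le_norm _ _
        have h2 : (∑ n ∈ s ∩ t, ‖x n‖ * ‖(f n : H)‖) ^ 2
            ≤ (∑ n ∈ s ∩ t, ‖x n‖ ^ 2) * ∑ n ∈ s ∩ t, ‖(f n : H)‖ ^ 2 :=
          Finset.sum_mul_sq_le_sq_mul_sq _ _ _
        have h3 : ∑ n ∈ s ∩ t, ‖x n‖ ^ 2 ≤ S2 :=
          Finset.sum_le_sum_of_subset_of_nonneg Finset.inter_subset_left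
            (fun i _ _ => sq_nonneg _)
        have h4 : ∑ n ∈ s ∩ t, ‖(f n : H)‖ ^ 2 ≤ ∑ k ∈ t, ‖(f k : H)‖ ^ 2 :=
          Finset.sum_le_sum_of_subset_of_nonneg Finset.inter_subset_right
            (fun i _ _ => sq_nonneg _)
        have h5 : c' ^ 2 * ∑ k ∈ t, ‖(f k : H)‖ ^ 2 ≤ ‖w‖ ^ 2 := by
          have h := hlow t (fun k => ((f k : H))) (fun k _ => hvmem k)
          rw [hrep]
          exact h
        have hn2 : 0 ≤ ∑ n ∈ s ∩ t, ‖x n‖ * ‖(f n : H)‖ :=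
          Finset.sum_nonneg fun i _ => mul_nonneg (norm_nonneg _) (norm_nonneg _)
        have h6 : 0 ≤ ∑ k ∈ t, ‖(f k : H)‖ ^ 2 := Finset.sum_nonneg fun i _ => sq_nonneg _
        have h7 : ‖(inner ℂ (∑ n ∈ s, x n) w : ℂ)‖ ^ 2 ≤ S2 * ∑ k ∈ t, ‖(f k : H)‖ ^ 2 := by
          nlinarith [norm_nonneg (inner ℂ (∑ n ∈ s, x n) w : ℂ),
            Finset.sum_nonneg (fun i (_ : i ∈ s ∩ t) => sq_nonneg ‖(f i : H)‖)]
        have hc2 : (0:ℝ) < c' ^ 2 := by positivity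
        have hgoal : c' ^ 2 * ‖(inner ℂ (∑ n ∈ s, x n) w : ℂ)‖ ^ 2 ≤ S2 * ‖w‖ ^ 2 := by
          have ha := mul_le_mul_of_nonneg_left h7 hc2.le
          have hb := mul_le_mul_of_nonneg_left h5 hS2nn
          nlinarith
        show ‖(inner ℂ (∑ n ∈ s, x n) w : ℂ)‖ ^ 2 ≤ (1 / c') ^ 2 * S2 * ‖w‖ ^ 2
        have heq : ‖(inner ℂ (∑ n ∈ s, x n) w : ℂ)‖ ^ 2
            = (c' ^ 2)⁻¹ * (c' ^ 2 * ‖(inner ℂ (∑ n ∈ s, x n) w : ℂ)‖ ^ 2) := by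
          field_simp
        rw [heq]
        calc (c' ^ 2)⁻¹ * (c' ^ 2 * ‖(inner ℂ (∑ n ∈ s, x n) w : ℂ)‖ ^ 2)
            ≤ (c' ^ 2)⁻¹ * (S2 * ‖w‖ ^ 2) :=
              mul_le_mul_of_nonneg_left hgoal (by positivity)
          _ = (1 / c') ^ 2 * S2 * ‖w‖ ^ 2 := by
              field_simp
      have hclosed : IsClosed {w : H |
          ‖(inner ℂ (∑ n ∈ s, x n) w : ℂ)‖ ^ 2 ≤ (1 / c') ^ 2 * S2 * ‖w‖ ^ 2} := by
        apply isClosed_le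
        · exact ((continuous_const.inner continuous_id).norm.pow 2)
        · exact (continuous_const.mul (continuous_norm.pow 2))
      have hdense2 : closure (((⨆ n, Hn' n) : Submodule ℂ H) : Set H) = Set.univ := by
        have h := congrArg (fun (p : Submodule ℂ H) => (p : Set H)) hdense
        simp only [Submodule.topologicalClosure_coe, Submodule.top_coe] at h
        exact h
      have h := closure_minimal hsub hclosed
      rw [hdense2] at h
      exact h (Set.mem_univ u)
    have hfinal := key (∑ n ∈ s, x n)
    rw [inner_self_eq_norm_sq_to_K] at hfinal
    rw [norm_pow, RCLike.norm_ofReal, abs_of_nonneg (norm_nonneg _)] at hfinal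
    by_cases h0 : ‖∑ n ∈ s, x n‖ = 0
    · rw [h0]
      nlinarith [sq_nonneg (1 / c')]
    · have hpos : 0 < ‖∑ n ∈ s, x n‖ ^ 2 :=
        lt_of_le_of_ne (sq_nonneg _) (fun h => h0 (by nlinarith [norm_nonneg (∑ n ∈ s, x n)]))
      nlinarith
  · -- (ii) → (i)
    rintro ⟨C, hC, hupp⟩
    have hBpos : (0:ℝ) < max CQ 1 := lt_of_lt_of_le zero_lt_one (le_max_right _ _)
    refine ⟨1 / (C * max CQ 1), by positivity, ?_⟩
    intro s x' hx'
    set N2 := ∑ n ∈ s, ‖x' n‖ ^ 2 with hN2def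
    have hN2nn : 0 ≤ N2 := Finset.sum_nonneg fun i _ => sq_nonneg _
    set xs := ∑ n ∈ s, x' n with hxsdef
    have hQax : ∀ n ∈ s, Qa n xs = x' n := by
      intro n hn
      rw [hxsdef, map_sum, Finset.sum_eq_single_of_mem n hn
        (fun k hk hkn => (hkerQa n (x' k)).mpr (hH'perp n k (Ne.symm hkn) (hx' k hk)))]
      exact (hmemH' n (x' n)).mp (hx' n hn)
    have hterm : ∀ n ∈ s, ‖x' n‖ ^ 2 = RCLike.re (inner ℂ (Q n (x' n)) xs : ℂ) := by
      intro n hn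
      have h1 : (inner ℂ (x' n) (Qa n xs) : ℂ) = inner ℂ (Q n (x' n)) xs :=
        ContinuousLinearMap.adjoint_inner_right (Q n) (x' n) xs
      rw [← h1, hQax n hn]
      exact (inner_self_eq_norm_sq (𝕜 := ℂ) (x' n)).symm
    set w := ∑ n ∈ s, Q n (x' n) with hwdef
    have hN2id : N2 = RCLike.re (inner ℂ w xs : ℂ) := by
      rw [hwdef, sum_inner, map_sum, hN2def]
      exact Finset.sum_congr rfl hterm
    have h1 : N2 ≤ ‖w‖ * ‖xs‖ := by
      rw [hN2id]
      calc RCLike.re (inner ℂ w xs : ℂ) ≤ ‖(inner ℂ w xs : ℂ)‖ := RCLike.re_le_norm _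
        _ ≤ ‖w‖ * ‖xs‖ := norm_inner_le_norm _ _
    have h2 : ‖w‖ ^ 2 ≤ C ^ 2 * ∑ n ∈ s, ‖Q n (x' n)‖ ^ 2 :=
      hupp s (fun n => Q n (x' n)) (fun n _ => hQmem n _)
    have h3 : ∑ n ∈ s, ‖Q n (x' n)‖ ^ 2 ≤ (max CQ 1) ^ 2 * N2 := by
      rw [hN2def, Finset.mul_sum]
      refine Finset.sum_le_sum fun i _ => ?_
      have hb : ‖Q i (x' i)‖ ≤ (max CQ 1) * ‖x' i‖ :=
        le_trans ((Q i).le_opNorm _)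
          (mul_le_mul_of_nonneg_right (le_trans (hCQ i) (le_max_left _ _)) (norm_nonneg _))
      nlinarith [norm_nonneg (Q i (x' i)), norm_nonneg (x' i)]
    have hw2 : ‖w‖ ^ 2 ≤ C ^ 2 * (max CQ 1) ^ 2 * N2 := by
      have := mul_le_mul_of_nonneg_left h3 (sq_nonneg C)
      nlinarith
    rcases eq_or_lt_of_le hN2nn with h0 | hpos
    · rw [← h0]
      nlinarith [sq_nonneg (1 / (C * max CQ 1)), sq_nonneg ‖xs‖]
    · have hkey : N2 * N2 ≤ (C ^ 2 * (max CQ 1) ^ 2 * N2) * ‖xs‖ ^ 2 := by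
        nlinarith [norm_nonneg w, norm_nonneg xs]
      have hN2le : N2 ≤ C ^ 2 * (max CQ 1) ^ 2 * ‖xs‖ ^ 2 := by
        have h4 : N2 * N2 ≤ N2 * (C ^ 2 * (max CQ 1) ^ 2 * ‖xs‖ ^ 2) := by nlinarith
        exact le_of_mul_le_mul_left h4 hpos
      have hCB : (0:ℝ) < C * max CQ 1 := by positivity
      rw [div_pow, one_pow, div_mul_eq_mul_div, div_le_iff₀ (by positivity)]
      nlinarith [hN2le]
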